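/- Let a, b, c, d ∈ ℂ with ad − bc ≠ 0 and let φ(z) = (az+b)/(cz+d) be a selfmap of 𝔻 (cz+d ≠ 0 and |φ(z)| < 1 for all z ∈ 𝔻). Assume that there do not exist α ∈ 𝔻 and z ∈ ℂ such that cz + d ≠ 0, |φ(z)| < 1, and conj(φ(α)) · z = 1 (i.e., the set 1/conj(φ(𝔻)) does not meet the preimage of 𝔻 under φ). Then the linear-fractional map σ∘φ⁻¹, given explicitly by Ψ(z) = ((conj(a)·d + conj(c)·c)·z − (conj(a)·b + conj(c)·a)) / ((−conj(b)·d − conj(d)·c)·z + (conj(b)·b + conj(d)·a)), maps 𝔻 into 𝔻: for every z ∈ 𝔻 its denominator is nonzero and |Ψ(z)| < 1. -/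

import Mathlib

open ComplexConjugate

noncomputable def Complex.abs : AbsoluteValue ℂ ℝ := NormedField.toAbsoluteValue ℂ

@[simp] lemma Complex.abs_apply' (z : ℂ) : Complex.abs z = ‖z‖ := rfl

lemma Complex.abs_ofReal (r : ℝ) : Complex.abs (r : ℂ) = |r| := by simp

lemma Complex.abs_conj (z : ℂ) : Complex.abs (conj z) = Complex.abs z := by simp

lemma lemA (a b c d : ℂ) (hdet : a * d - b * c ≠ 0)
    (hself : ∀ z : ℂ, Complex.abs z < 1 →
      c * z + d ≠ 0 ∧ Complex.abs ((a * z + b) / (c * z + d)) < 1)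
    (hdisj : ¬ ∃ (α z : ℂ), Complex.abs α < 1 ∧ c * z + d ≠ 0 ∧
      Complex.abs ((a * z + b) / (c * z + d)) < 1 ∧
      conj ((a * α + b) / (c * α + d)) * z = 1)
    (z : ℂ) (hz : Complex.abs z < 1) (hac : a - c * z ≠ 0)
    (hN : (-conj b * d - conj d * c) * z + (conj b * b + conj d * a) ≠ 0) :
    Complex.abs (((conj a * d + conj c * c) * z - (conj a * b + conj c * a)) /
      ((-conj b * d - conj d * c) * z + (conj b * b + conj d * a))) ≤ 1 := by
  by_contra hgt
  push_neg at hgt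
  set M : ℂ := (conj a * d + conj c * c) * z - (conj a * b + conj c * a) with hMdef
  set N : ℂ := (-conj b * d - conj d * c) * z + (conj b * b + conj d * a) with hNdef
  rw [map_div₀] at hgt
  have hNabs : 0 < Complex.abs N := by
    simpa using (Complex.abs.ne_zero_iff).mpr hN
  have hMN : Complex.abs N < Complex.abs M := by
    rw [lt_div_iff₀ hNabs] at hgt; linarith
  have hM0 : M ≠ 0 := by
    intro h
    rw [h, map_zero] at hMN
    exact (Complex.abs.nonneg N).not_gt hMN
  set α : ℂ := conj (N / M) with hαdef
  have hαlt : Complex.abs α < 1 := by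
    rw [hαdef, Complex.abs_conj, map_div₀, div_lt_one (by simpa using (Complex.abs.ne_zero_iff).mpr hM0)]
    exact hMN
  have hconjα : conj α = N / M := by rw [hαdef, Complex.conj_conj]
  obtain ⟨hcαd, -⟩ := hself α hαlt
  set z' : ℂ := (d * z - b) / (a - c * z) with hz'def
  have hz'den : c * z' + d = (a * d - b * c) / (a - c * z) := by
    rw [hz'def]; field_simp; ring
  have hz'den0 : c * z' + d ≠ 0 := by
    rw [hz'den]; exact div_ne_zero hdet hac
  have hφz' : (a * z' + b) / (c * z' + d) = z := by
    rw [hz'def, hz'den, div_eq_iff (div_ne_zero hdet hac)]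
    rw [mul_div_assoc', div_add' _ _ _ hac, mul_div_assoc', div_eq_div_iff hac hac]
    ring
  have hden2 : conj c * (N / M) + conj d ≠ 0 := by
    rw [← hconjα]
    intro h
    apply hcαd
    have : conj (conj c * conj α + conj d) = conj (0 : ℂ) := by rw [h]
    simpa [map_add, map_mul, Complex.conj_conj] using this
  have hkey : conj ((a * α + b) / (c * α + d)) * z' = 1 := by
    rw [map_div₀, map_add, map_add, map_mul, map_mul, hconjα, hz'def]
    rw [div_mul_div_comm, div_eq_one_iff_eq (mul_ne_zero hden2 hac)]
    field_simp [hM0]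
    rw [hMdef, hNdef]
    ring
  exact hdisj ⟨α, z', hαlt, hz'den0, by rw [hφz']; exact hz, hkey⟩

lemma lemB (a b c d : ℂ) (hdet : a * d - b * c ≠ 0)
    (hself : ∀ z : ℂ, Complex.abs z < 1 →
      c * z + d ≠ 0 ∧ Complex.abs ((a * z + b) / (c * z + d)) < 1)
    (hdisj : ¬ ∃ (α z : ℂ), Complex.abs α < 1 ∧ c * z + d ≠ 0 ∧
      Complex.abs ((a * z + b) / (c * z + d)) < 1 ∧
      conj ((a * α + b) / (c * α + d)) * z = 1)
    (z : ℂ) (hz : Complex.abs z < 1) :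
    (-conj b * d - conj d * c) * z + (conj b * b + conj d * a) ≠ 0 := by
  intro hN
  set P : ℂ := conj a * d + conj c * c with hP
  set Qp : ℂ := conj a * b + conj c * a with hQp
  set R : ℂ := -conj b * d - conj d * c with hR
  set S : ℂ := conj b * b + conj d * a with hS
  have hD0 : P * S + Qp * R ≠ 0 := by
    have hD : P * S + Qp * R = conj (a * d - b * c) * (a * d - b * c) := by
      rw [hP, hQp, hR, hS, map_sub, map_mul, map_mul]; ring
    rw [hD]
    exact mul_ne_zero ((map_ne_zero (starRingEnd ℂ)).mpr hdet) hdet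
  have hRne : R ≠ 0 := by
    intro h
    rw [h, zero_mul, zero_add] at hN
    exact hD0 (by rw [h, hN]; ring)
  have hM0 : P * z - Qp ≠ 0 := by
    intro h
    apply hD0
    linear_combination P * hN - R * h
  set e : ℂ := if z = 0 then 1 else -z with he
  have he0 : e ≠ 0 := by
    rw [he]; split
    · exact one_ne_zero
    · simpa using ‹¬ z = 0›
  have heabs : Complex.abs e ≤ 1 := by
    rw [he]; split
    · simp
    · simpa using hz.le
  set mz : ℝ := Complex.abs (P * z - Qp) with hmz
  have hmzpos : 0 < mz := Complex.abs.pos hM0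
  set t0 : ℝ := min (1/2) (mz / (2 * (Complex.abs P + Complex.abs R + 1))) with ht0
  have ht0pos : 0 < t0 := by
    apply lt_min (by norm_num)
    positivity
  have main : ∀ t : ℝ, 0 < t → t ≤ t0 → a - c * (z + (t : ℂ) * e) ≠ 0 → False := by
    intro t ht htle hac
    have hthalf : t ≤ 1/2 := le_trans htle (min_le_left _ _)
    have htmz : t * (Complex.abs P + Complex.abs R + 1) ≤ mz / 2 := by
      have h1 : t ≤ mz / (2 * (Complex.abs P + Complex.abs R + 1)) :=
        le_trans htle (min_le_right _ _)
      have h2 : (0:ℝ) < 2 * (Complex.abs P + Complex.abs R + 1) := by positivity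
      have h1' := (le_div_iff₀ h2).mp h1
      linarith
    set w : ℂ := z + (t : ℂ) * e with hw
    have habsw : Complex.abs w < 1 := by
      rw [hw, he]
      split
      · rename_i h0
        rw [h0]
        simp [Complex.abs_ofReal, abs_of_pos ht]
        linarith
      · have : z + (t : ℂ) * -z = ((1 - t : ℝ) : ℂ) * z := by push_cast; ring
        rw [this, map_mul, Complex.abs_ofReal, abs_of_nonneg (by linarith)]
        nlinarith [Complex.abs.nonneg z]
    have hNw : R * w + S = (t : ℂ) * (R * e) := by
      rw [hw]
      linear_combination hN
    have hNw0 : R * w + S ≠ 0 := by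
      rw [hNw]
      exact mul_ne_zero (by exact_mod_cast ht.ne') (mul_ne_zero hRne he0)
    have hNwabs : Complex.abs (R * w + S) = t * (Complex.abs R * Complex.abs e) := by
      rw [hNw, map_mul, map_mul, Complex.abs_ofReal, abs_of_pos ht]
    have htri : mz ≤ Complex.abs (P * w - Qp) + t * (Complex.abs P * Complex.abs e) := by
      have hid : P * z - Qp = (P * w - Qp) - (t : ℂ) * (P * e) := by rw [hw]; ring
      calc mz = Complex.abs ((P * w - Qp) - (t : ℂ) * (P * e)) := by rw [hmz, hid]
        _ ≤ Complex.abs (P * w - Qp) + Complex.abs ((t : ℂ) * (P * e)) :=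
            Complex.abs.sub_le_add _ _
        _ = Complex.abs (P * w - Qp) + t * (Complex.abs P * Complex.abs e) := by
            rw [map_mul, map_mul, Complex.abs_ofReal, abs_of_pos ht]
    have hA := lemA a b c d hdet hself hdisj w habsw hac hNw0
    rw [map_div₀, div_le_one (Complex.abs.pos hNw0)] at hA
    rw [hNwabs] at hA
    have hp := Complex.abs.nonneg P
    have hr := Complex.abs.nonneg R
    have hee := Complex.abs.nonneg e
    nlinarith [htri, htmz, hA, mul_le_of_le_one_right (mul_nonneg ht.le hp) heabs,
      mul_le_of_le_one_right (mul_nonneg ht.le hr) heabs]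
  by_cases hc : a - c * (z + (t0 : ℂ) * e) = 0
  · apply main (t0/2) (by positivity) (by linarith)
    intro h2
    have hce : c * e * ((t0/2 : ℝ) : ℂ) = 0 := by
      push_cast at hc h2 ⊢
      linear_combination h2 - hc
    have hc0 : c = 0 := by
      rcases mul_eq_zero.mp hce with h | h
      · rcases mul_eq_zero.mp h with h | h
        · exact h
        · exact absurd h he0
      · exact absurd h (by exact_mod_cast (by positivity : (0:ℝ) < t0/2).ne')
    apply hdet
    rw [hc0] at hc ⊢
    simp at hc
    rw [hc]
    ring
  · exact main t0 ht0pos le_rfl hc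

lemma lemC (a b c d : ℂ) (hdet : a * d - b * c ≠ 0)
    (hself : ∀ z : ℂ, Complex.abs z < 1 →
      c * z + d ≠ 0 ∧ Complex.abs ((a * z + b) / (c * z + d)) < 1)
    (hdisj : ¬ ∃ (α z : ℂ), Complex.abs α < 1 ∧ c * z + d ≠ 0 ∧
      Complex.abs ((a * z + b) / (c * z + d)) < 1 ∧
      conj ((a * α + b) / (c * α + d)) * z = 1)
    (z : ℂ) (hz : Complex.abs z < 1)
    (hNz : (-conj b * d - conj d * c) * z + (conj b * b + conj d * a) ≠ 0)
    (hge : 1 ≤ Complex.abs (((conj a * d + conj c * c) * z - (conj a * b + conj c * a)) /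
      ((-conj b * d - conj d * c) * z + (conj b * b + conj d * a)))) : False := by
  set P : ℂ := conj a * d + conj c * c with hP
  set Qp : ℂ := conj a * b + conj c * a with hQp
  set R : ℂ := -conj b * d - conj d * c with hR
  set S : ℂ := conj b * b + conj d * a with hS
  have hD0 : P * S + Qp * R ≠ 0 := by
    have hD : P * S + Qp * R = conj (a * d - b * c) * (a * d - b * c) := by
      rw [hP, hQp, hR, hS, map_sub, map_mul, map_mul]; ring
    rw [hD]
    exact mul_ne_zero ((map_ne_zero (starRingEnd ℂ)).mpr hdet) hdet
  set u : ℂ := (P * z - Qp) / (R * z + S) with hu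
  have hu0 : u ≠ 0 := by
    intro h
    rw [h, map_zero] at hge
    linarith
  set e : ℂ := u * (R * z + S)^2 / (P * S + Qp * R) with he
  have he0 : e ≠ 0 := by
    rw [he]
    exact div_ne_zero (mul_ne_zero hu0 (pow_ne_zero 2 hNz)) hD0
  have heabs : 0 < Complex.abs e := Complex.abs.pos he0
  clear_value P Qp R S u e
  set nz : ℝ := Complex.abs (R * z + S) with hnz
  have hnzpos : 0 < nz := Complex.abs.pos hNz
  set t0 : ℝ := min ((1 - Complex.abs z) / (2 * (Complex.abs e + 1)))
      (nz / (3 * (Complex.abs R * Complex.abs e + 1))) with ht0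
  have ht0pos : 0 < t0 := by
    apply lt_min
    · have : 0 < 1 - Complex.abs z := by linarith
      positivity
    · positivity
  have main : ∀ t : ℝ, 0 < t → t ≤ t0 → a - c * (z + (t : ℂ) * e) ≠ 0 → False := by
    intro t ht htle hac
    have hr := Complex.abs.nonneg R
    have h1 : t ≤ (1 - Complex.abs z) / (2 * (Complex.abs e + 1)) :=
      le_trans htle (min_le_left _ _)
    have h2 : t ≤ nz / (3 * (Complex.abs R * Complex.abs e + 1)) :=
      le_trans htle (min_le_right _ _)
    have h1' : t * (2 * (Complex.abs e + 1)) ≤ 1 - Complex.abs z :=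
      (le_div_iff₀ (by positivity)).mp h1
    have h2' : t * (3 * (Complex.abs R * Complex.abs e + 1)) ≤ nz :=
      (le_div_iff₀ (by positivity)).mp h2
    set w : ℂ := z + (t : ℂ) * e with hw
    clear_value w
    have habsw : Complex.abs w < 1 := by
      rw [hw]
      calc Complex.abs (z + (t : ℂ) * e) ≤ Complex.abs z + Complex.abs ((t:ℂ) * e) :=
            Complex.abs.add_le _ _
        _ = Complex.abs z + t * Complex.abs e := by
            rw [map_mul, Complex.abs_ofReal, abs_of_pos ht]
        _ < 1 := by nlinarith
    have hdiffabs : Complex.abs (R * w + S - (R * z + S)) ≤ nz / 3 := by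
      have hid : R * w + S - (R * z + S) = (t : ℂ) * (R * e) := by rw [hw]; ring
      rw [hid, map_mul, map_mul, Complex.abs_ofReal, abs_of_pos ht]
      nlinarith
    have hNwabs : 2 * nz / 3 ≤ Complex.abs (R * w + S) := by
      have htri : nz ≤ Complex.abs (R * w + S) + Complex.abs (R * w + S - (R * z + S)) := by
        calc nz = Complex.abs (R * w + S - (R * w + S - (R * z + S))) := by
              rw [hnz]; ring_nf
          _ ≤ _ := Complex.abs.sub_le_add _ _
      linarith
    have hNw : R * w + S ≠ 0 := by
      intro h
      rw [h, map_zero] at hNwabs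
      linarith
    have hkey : (P * w - Qp) / (R * w + S) = u * (1 + (t : ℂ) * ((R * z + S) / (R * w + S))) := by
      have hdiff : (P * w - Qp) / (R * w + S) - (P * z - Qp) / (R * z + S)
          = (P * S + Qp * R) * (w - z) / ((R * w + S) * (R * z + S)) := by
        rw [div_sub_div _ _ hNw hNz, div_eq_div_iff (mul_ne_zero hNw hNz) (mul_ne_zero hNw hNz)]
        ring
      rw [← hu] at hdiff
      have hwz : w - z = (t : ℂ) * e := by rw [hw]; ring
      rw [hwz] at hdiff
      have he' : (P * S + Qp * R) * ((t : ℂ) * e) / ((R * w + S) * (R * z + S))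
          = u * ((t : ℂ) * ((R * z + S) / (R * w + S))) := by
        rw [he]
        field_simp
      rw [he'] at hdiff
      linear_combination hdiff
    set X : ℂ := (R * z + S) / (R * w + S) with hX
    clear_value X
    have hX1 : Complex.abs (X - 1) ≤ 1/2 := by
      have hid : X - 1 = -(R * w + S - (R * z + S)) / (R * w + S) := by
        rw [hX]; field_simp; ring
      rw [hid, map_div₀, map_neg_eq_map]
      rw [div_le_iff₀ (Complex.abs.pos hNw)]
      nlinarith
    have habs1tX : 1 + t/2 ≤ Complex.abs (1 + (t : ℂ) * X) := by
      have hid : ((1 + t : ℝ) : ℂ) = (1 + (t : ℂ) * X) - (t : ℂ) * (X - 1) := by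
        push_cast; ring
      have htri : Complex.abs ((1 + t : ℝ) : ℂ) ≤
          Complex.abs (1 + (t : ℂ) * X) + Complex.abs ((t : ℂ) * (X - 1)) := by
        rw [hid]; exact Complex.abs.sub_le_add _ _
      rw [Complex.abs_ofReal, abs_of_pos (by linarith), map_mul, Complex.abs_ofReal,
        abs_of_pos ht] at htri
      nlinarith
    have hNw' : (-conj b * d - conj d * c) * w + (conj b * b + conj d * a) ≠ 0 := by
      rw [← hR, ← hS]; exact hNw
    have hA := lemA a b c d hdet hself hdisj w habsw hac hNw'
    rw [← hP, ← hQp, ← hR, ← hS, hkey, map_mul] at hA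
    nlinarith [Complex.abs.nonneg (1 + (t : ℂ) * X)]
  by_cases hc : a - c * (z + (t0 : ℂ) * e) = 0
  · apply main (t0/2) (by positivity) (by linarith)
    intro h2
    have hce : c * e * ((t0/2 : ℝ) : ℂ) = 0 := by
      push_cast at hc h2 ⊢
      linear_combination h2 - hc
    have hc0 : c = 0 := by
      rcases mul_eq_zero.mp hce with h | h
      · rcases mul_eq_zero.mp h with h | h
        · exact h
        · exact absurd h he0
      · exact absurd h (by exact_mod_cast (by positivity : (0:ℝ) < t0/2).ne')
    apply hdet
    rw [hc0] at hc ⊢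
    simp at hc
    rw [hc]
    ring
  · exact main t0 ht0pos le_rfl hc

/-- If `φ(z) = (az+b)/(cz+d)` is a linear-fractional selfmap of the unit disk and the
set `1/conj(φ(𝔻))` does not meet `φ⁻¹(𝔻)`, then the linear-fractional map
`σ ∘ φ⁻¹` (with the displayed coefficients) maps the unit disk into itself. -/
theorem sigma_comp_phi_inv_selfmap_of_disjoint (a b c d : ℂ)
    (hdet : a * d - b * c ≠ 0)
    (hself : ∀ z : ℂ, ‖z‖ < 1 →
      c * z + d ≠ 0 ∧ ‖(a * z + b) / (c * z + d)‖ < 1)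
    (hdisj : ¬ ∃ (α z : ℂ), ‖α‖ < 1 ∧ c * z + d ≠ 0 ∧
      ‖(a * z + b) / (c * z + d)‖ < 1 ∧
      conj ((a * α + b) / (c * α + d)) * z = 1) :
    ∀ z : ℂ, ‖z‖ < 1 →
      (-conj b * d - conj d * c) * z + (conj b * b + conj d * a) ≠ 0 ∧
      ‖((conj a * d + conj c * c) * z - (conj a * b + conj c * a)) /
        ((-conj b * d - conj d * c) * z + (conj b * b + conj d * a))‖ < 1 := by
  intro z hz
  have hN := lemB a b c d hdet hself hdisj z hz
  refine ⟨hN, ?_⟩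
  by_contra hge
  push_neg at hge
  exact lemC a b c d hdet hself hdisj z hz hN hge
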